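/- Let L be a self-adjoint operator on a Hilbert space H with exactly one simple negative eigenvalue, a simple zero eigenvalue with eigenvector v_0, and the rest of the spectrum positive and bounded away from zero. Let φ ∈ H with ⟨φ, v_0⟩ = 0, φ ∉ ker L, and suppose ⟨L^{-1}φ, φ⟩ < 0 (where L^{-1}φ is the unique solution of Lψ = φ orthogonal to v_0). Then L restricted to the orthogonal complement of φ is nonnegative, with kernel spanned by v_0. -/

import Mathlib

open scoped RealInnerProductSpace
open Polynomial

section Aux
variable {H : Type*} [NormedAddCommGroup H] [InnerProductSpace ℝ H] [CompleteSpace H]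

lemma aux_symm (T : H →L[ℝ] H) (hT : IsSelfAdjoint T) (x y : H) : ⟪T x, y⟫ = ⟪x, T y⟫ := by
  have := hT.isSymmetric x y
  simpa using this

lemma aux_sa_smul_one (m : ℝ) : IsSelfAdjoint (m • (1 : H →L[ℝ] H)) :=
  (IsSelfAdjoint.all m).smul (IsSelfAdjoint.one (H →L[ℝ] H))

lemma aux_sa_algebraMap (m : ℝ) : IsSelfAdjoint (algebraMap ℝ (H →L[ℝ] H) m) := by
  rw [Algebra.algebraMap_eq_smul_one]; exact aux_sa_smul_one m

lemma aux_isUnit_of_boundedBelow (T : H →L[ℝ] H) (hT : IsSelfAdjoint T) (c : ℝ) (hc : 0 < c)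
    (hb : ∀ u : H, c * ‖u‖ ≤ ‖T u‖) : IsUnit T := by
  rw [ContinuousLinearMap.isUnit_iff_bijective,
    ContinuousLinearMap.bijective_iff_dense_range_and_antilipschitz]
  constructor
  · rw [Submodule.topologicalClosure_eq_top_iff, Submodule.eq_bot_iff]
    intro v hv
    rw [Submodule.mem_orthogonal] at hv
    have h1 : ⟪T (T v), v⟫ = 0 := hv _ ⟨T v, rfl⟩
    rw [aux_symm T hT (T v) v] at h1
    have h3 : T v = 0 := by
      have : ⟪T v, T v⟫ = 0 := by rw [real_inner_comm]; exact h1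
      simpa using this
    have := hb v
    rw [h3] at this
    simp only [norm_zero] at this
    have hn : ‖v‖ ≤ 0 := by nlinarith [norm_nonneg v]
    simpa using le_antisymm hn (norm_nonneg v)
  · refine ⟨⟨c⁻¹, by positivity⟩, T.antilipschitz_of_bound fun x => ?_⟩
    change ‖x‖ ≤ c⁻¹ * ‖T x‖
    have h := hb x
    calc ‖x‖ = c⁻¹ * (c * ‖x‖) := by field_simp
      _ ≤ c⁻¹ * ‖T x‖ := by
          apply mul_le_mul_of_nonneg_left h (by positivity)

lemma aux_cs (T : H →L[ℝ] H) (hT : IsSelfAdjoint T) (hpos : ∀ u : H, 0 ≤ ⟪T u, u⟫) (x y : H) :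
    ⟪T x, y⟫ ^ 2 ≤ ⟪T x, x⟫ * ⟪T y, y⟫ := by
  have key : ∀ t : ℝ, 0 ≤ ⟪T y, y⟫ * (t * t) + (2 * ⟪T x, y⟫) * t + ⟪T x, x⟫ := by
    intro t
    have h := hpos (x + t • y)
    have hsym : ⟪T y, x⟫ = ⟪T x, y⟫ := by
      rw [aux_symm T hT y x, real_inner_comm]
    simp only [map_add, map_smul, inner_add_left, inner_add_right, real_inner_smul_left,
      real_inner_smul_right] at h
    rw [hsym] at h
    nlinarith [h]
  have := discrim_le_zero key
  rw [discrim] at this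
  nlinarith [this]

lemma aux_normsq_le (T : H →L[ℝ] H) (hT : IsSelfAdjoint T) (hpos : ∀ u : H, 0 ≤ ⟪T u, u⟫)
    (u : H) : ‖T u‖ ^ 2 ≤ ‖T‖ * ⟪T u, u⟫ := by
  rcases eq_or_ne (T u) 0 with h | h
  · rw [h]; simp
  · have h1 := aux_cs T hT hpos u (T u)
    have h2 : ⟪T (T u), T u⟫ ≤ ‖T‖ * (‖T u‖ * ‖T u‖) := by
      calc ⟪T (T u), T u⟫ ≤ ‖T (T u)‖ * ‖T u‖ := real_inner_le_norm _ _
        _ ≤ ‖T‖ * ‖T u‖ * ‖T u‖ := by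
            have := T.le_opNorm (T u)
            nlinarith [norm_nonneg (T u)]
        _ = ‖T‖ * (‖T u‖ * ‖T u‖) := by ring
    have h3 : ⟪T u, T u⟫ = ‖T u‖ ^ 2 := real_inner_self_eq_norm_sq _
    have h4 : (0:ℝ) < ‖T u‖ := norm_pos_iff.mpr h
    have h5 : 0 ≤ ⟪T u, u⟫ := hpos u
    have h6 : ‖T u‖ ^ 2 * ‖T u‖ ^ 2 ≤ (‖T‖ * ⟪T u, u⟫) * ‖T u‖ ^ 2 := by
      rw [real_inner_comm] at h1
      nlinarith [h1, h2, h3, h5]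
    exact le_of_mul_le_mul_right h6 (by positivity)

/-- The infimum of the Rayleigh quotient of a self-adjoint operator is in the spectrum,
and bounds the quadratic form from below. -/
lemma aux_exists_bot (T : H →L[ℝ] H) (hT : IsSelfAdjoint T) (u₀ : H) (hu₀ : u₀ ≠ 0) :
    ∃ m ∈ spectrum ℝ T, ∀ v : H, m * ‖v‖ ^ 2 ≤ ⟪T v, v⟫ := by
  set S : Set ℝ := (fun v => ⟪T v, v⟫) '' {v : H | ‖v‖ = 1} with hS
  have hSne : S.Nonempty := ⟨_, ⟨‖u₀‖⁻¹ • u₀, norm_smul_inv_norm hu₀, rfl⟩⟩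
  have hSbdd : BddBelow S := by
    refine ⟨-‖T‖, ?_⟩
    rintro r ⟨v, hv, rfl⟩
    have h1 : |⟪T v, v⟫| ≤ ‖T v‖ * ‖v‖ := abs_real_inner_le_norm _ _
    have h2 := T.le_opNorm v
    rw [Set.mem_setOf_eq] at hv
    rw [hv] at h1 h2
    simp only [mul_one] at h1 h2
    have := abs_le.mp (h1.trans h2)
    linarith [this.1]
  set m := sInf S with hm
  have hform : ∀ v : H, m * ‖v‖ ^ 2 ≤ ⟪T v, v⟫ := by
    intro v
    rcases eq_or_ne v 0 with rfl | hv
    · simp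
    · have hmem : ⟪T (‖v‖⁻¹ • v), (‖v‖⁻¹ • v)⟫ ∈ S := ⟨_, norm_smul_inv_norm hv, rfl⟩
      have hle := csInf_le hSbdd hmem
      have hvn : (0:ℝ) < ‖v‖ := norm_pos_iff.mpr hv
      rw [map_smul, real_inner_smul_left, real_inner_smul_right] at hle
      have h' := mul_le_mul_of_nonneg_right hle (mul_nonneg (norm_nonneg v) (norm_nonneg v))
      have h2 : m * (‖v‖ * ‖v‖) ≤ ⟪T v, v⟫ := by
        calc m * (‖v‖ * ‖v‖) ≤ (‖v‖⁻¹ * (‖v‖⁻¹ * ⟪T v, v⟫)) * (‖v‖ * ‖v‖) := h'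
          _ = ⟪T v, v⟫ := by field_simp
      nlinarith [h2]
  refine ⟨m, ?_, hform⟩
  rw [spectrum.mem_iff]
  intro hunit
  have hA : IsUnit (T - algebraMap ℝ (H →L[ℝ] H) m) := by
    have := hunit.neg
    rwa [neg_sub] at this
  set A : H →L[ℝ] H := T - algebraMap ℝ (H →L[ℝ] H) m with hAdef
  have hAsa : IsSelfAdjoint A := hT.sub (aux_sa_algebraMap m)
  have hAapp : ∀ v : H, A v = T v - m • v := by
    intro v
    simp [hAdef, Algebra.algebraMap_eq_smul_one, ContinuousLinearMap.sub_apply]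
  have hApos : ∀ v : H, 0 ≤ ⟪A v, v⟫ := by
    intro v
    rw [hAapp, inner_sub_left, real_inner_smul_left, real_inner_self_eq_norm_sq]
    have := hform v
    linarith
  obtain ⟨R, hR⟩ : ∃ R : H →L[ℝ] H, R * A = 1 := ⟨↑hA.unit⁻¹, hA.val_inv_mul⟩
  have hRA : ∀ v : H, R (A v) = v := fun v => by
    have : (R * A) v = (1 : H →L[ℝ] H) v := by rw [hR]
    simpa using this
  set ε : ℝ := (‖R‖ ^ 2 * ‖A‖ + 1)⁻¹ with hε
  have hεpos : 0 < ε := by positivity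
  obtain ⟨r, hrS, hrlt⟩ := (csInf_lt_iff hSbdd hSne).mp (show sInf S < m + ε by
    rw [← hm]; linarith)
  obtain ⟨v, hv1, rfl⟩ := hrS
  rw [Set.mem_setOf_eq] at hv1
  have hAv : ⟪A v, v⟫ < ε := by
    rw [hAapp, inner_sub_left, real_inner_smul_left, real_inner_self_eq_norm_sq, hv1]
    linarith
  have h1 : ‖v‖ ≤ ‖R‖ * ‖A v‖ := by
    calc ‖v‖ = ‖R (A v)‖ := by rw [hRA]
      _ ≤ ‖R‖ * ‖A v‖ := R.le_opNorm _
  have h2 : ‖A v‖ ^ 2 ≤ ‖A‖ * ⟪A v, v⟫ := aux_normsq_le A hAsa hApos v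
  have h3 : (1:ℝ) ≤ ‖R‖ ^ 2 * (‖A‖ * ⟪A v, v⟫) := by
    have h0 : (1:ℝ) = ‖v‖ ^ 2 := by rw [hv1]; norm_num
    rw [h0]
    calc ‖v‖ ^ 2 ≤ (‖R‖ * ‖A v‖) ^ 2 := by nlinarith [norm_nonneg v, norm_nonneg (‖R‖ * ‖A v‖), h1]
      _ = ‖R‖ ^ 2 * ‖A v‖ ^ 2 := by ring
      _ ≤ ‖R‖ ^ 2 * (‖A‖ * ⟪A v, v⟫) := by nlinarith [sq_nonneg ‖R‖, h2]
  have h4 : 0 ≤ ⟪A v, v⟫ := hApos v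
  have h5 : ‖R‖ ^ 2 * ‖A‖ * ε < 1 := by
    rw [hε]
    rw [mul_inv_lt_iff₀ (by positivity)]
    nlinarith [sq_nonneg ‖R‖, norm_nonneg A, norm_nonneg R]
  nlinarith [h3, h5, hAv, sq_nonneg ‖R‖, norm_nonneg A]


lemma aux_aeval_sa (L : H →L[ℝ] H) (hL : IsSelfAdjoint L) (p : ℝ[X]) :
    IsSelfAdjoint (aeval L p) := by
  induction p using Polynomial.induction_on with
  | C a => simpa [aeval_C] using aux_sa_algebraMap (H := H) a
  | add p q hp hq => simpa [map_add] using hp.add hq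
  | monomial n a ih =>
      have h : (aeval L) (C a * X ^ (n+1)) = a • L ^ (n+1) := by
        simp [Algebra.algebraMap_eq_smul_one, smul_mul_assoc]
      rw [h]
      exact (IsSelfAdjoint.all a).smul (hL.pow (n+1))

lemma aux_pow_eig (L : H →L[ℝ] H) (v : H) (lam : ℝ) (hv : L v = lam • v) (n : ℕ) :
    (L ^ n) v = lam ^ n • v := by
  induction n with
  | zero => simp
  | succ n ih =>
      rw [pow_succ, ContinuousLinearMap.mul_apply, hv, map_smul, ih, smul_smul, pow_succ]
      congr 1
      ring

lemma aux_aeval_eig (L : H →L[ℝ] H) (v : H) (lam : ℝ) (hv : L v = lam • v) (p : ℝ[X]) :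
    (aeval L p) v = (p.eval lam) • v := by
  induction p using Polynomial.induction_on with
  | C a => simp [Algebra.algebraMap_eq_smul_one]
  | add p q hp hq => simp [map_add, ContinuousLinearMap.add_apply, hp, hq, add_smul]
  | monomial n a ih =>
      have h : (aeval L) (C a * X ^ (n+1)) = a • L ^ (n+1) := by
        simp [Algebra.algebraMap_eq_smul_one, smul_mul_assoc]
      rw [h, ContinuousLinearMap.smul_apply, aux_pow_eig L v lam hv, smul_smul]
      simp [smul_smul]

lemma aux_multiset_factor (L : H →L[ℝ] H) (s : Multiset ℝ[X])
    (h : ¬IsUnit (aeval L s.prod)) : ∃ r ∈ s, ¬IsUnit (aeval L r) := by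
  induction s using Multiset.induction_on with
  | empty => simp at h
  | cons a s ih =>
      rw [Multiset.prod_cons, map_mul] at h
      by_cases ha : IsUnit (aeval L a)
      · obtain ⟨r, hr, hr2⟩ := ih (fun hs => h (ha.mul hs))
        exact ⟨r, Multiset.mem_cons_of_mem hr, hr2⟩
      · exact ⟨a, Multiset.mem_cons_self a s, ha⟩

lemma aux_quad_rep (p : ℝ[X]) (h : p.natDegree ≤ 2) :
    p = C (p.coeff 2) * X ^ 2 + C (p.coeff 1) * X + C (p.coeff 0) := by
  ext n
  rcases n with _|_|_|n
  · simp
  · simp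
  · simp
  · rw [coeff_eq_zero_of_natDegree_lt (by omega)]
    simp [coeff_X_pow]

/-- A self-adjoint operator with a real quadratic polynomial having negative discriminant
applied to it yields a unit. -/
lemma aux_quadratic_unit (L : H →L[ℝ] H) (hL : IsSelfAdjoint L) (a b c : ℝ) (ha : a ≠ 0)
    (hdisc : discrim a b c < 0) : IsUnit (a • L ^ 2 + b • L + c • (1 : H →L[ℝ] H)) := by
  set e : ℝ := b / (2 * a) with he
  set β : ℝ := c / a - e ^ 2 with hβ
  have hβpos : 0 < β := by
    have key : c / a - (b / (2*a))^2 = (4*a*c - b^2) / (4*a^2) := by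
      field_simp
      ring
    rw [hβ, he, key]
    apply div_pos
    · rw [discrim] at hdisc
      linarith
    · positivity
  set S : H →L[ℝ] H := L + e • 1 with hSdef
  have hSsa : IsSelfAdjoint S := hL.add (aux_sa_smul_one e)
  set V : H →L[ℝ] H := S ^ 2 + β • 1 with hVdef
  have hVsa : IsSelfAdjoint V := (hSsa.pow 2).add (aux_sa_smul_one β)
  have hVapp : ∀ u : H, V u = S (S u) + β • u := by
    intro u
    rw [hVdef]
    simp [sq, ContinuousLinearMap.add_apply, ContinuousLinearMap.smul_apply,
      ContinuousLinearMap.mul_apply]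
  have hVform : ∀ u : H, β * ‖u‖ ^ 2 ≤ ⟪V u, u⟫ := by
    intro u
    rw [hVapp, inner_add_left, real_inner_smul_left, real_inner_self_eq_norm_sq,
      aux_symm S hSsa (S u) u]
    have : 0 ≤ ⟪S u, S u⟫ := real_inner_self_nonneg
    linarith
  have hVbb : ∀ u : H, β * ‖u‖ ≤ ‖V u‖ := by
    intro u
    rcases eq_or_ne u 0 with rfl | hu
    · simp
    · have h1 := hVform u
      have h2 : ⟪V u, u⟫ ≤ ‖V u‖ * ‖u‖ := real_inner_le_norm _ _
      have h3 : (0:ℝ) < ‖u‖ := norm_pos_iff.mpr hu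
      nlinarith
  have hVunit := aux_isUnit_of_boundedBelow V hVsa β hβpos hVbb
  have haU : IsUnit (algebraMap ℝ (H →L[ℝ] H) a) := (ha.isUnit).map (algebraMap ℝ (H →L[ℝ] H))
  have hS2 : S ^ 2 = L ^ 2 + (2 * e) • L + (e ^ 2) • (1 : H →L[ℝ] H) := by
    ext u
    simp only [hSdef, sq, ContinuousLinearMap.mul_apply, ContinuousLinearMap.add_apply,
      ContinuousLinearMap.smul_apply, ContinuousLinearMap.one_apply, map_add, map_smul]
    module
  have hb : b = a * (2 * e) := by
    rw [he]
    field_simp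
  have hc : c = a * e ^ 2 + a * β := by
    rw [hβ, he]
    field_simp
    ring
  have hkey : a • L ^ 2 + b • L + c • (1 : H →L[ℝ] H) = algebraMap ℝ (H →L[ℝ] H) a * V := by
    rw [← Algebra.smul_def, hVdef, hS2, hb, hc]
    module
  rw [hkey]
  exact haU.mul hVunit

/-- Spectral mapping (subset direction) for polynomials of self-adjoint operators
on a real Hilbert space. -/
lemma aux_specmap (L : H →L[ℝ] H) (hL : IsSelfAdjoint L) (hne : (spectrum ℝ L).Nonempty)
    (p : ℝ[X]) {μ : ℝ} (hμ : μ ∈ spectrum ℝ (aeval L p)) :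
    ∃ x ∈ spectrum ℝ L, p.eval x = μ := by
  rw [spectrum.mem_iff] at hμ
  set q : ℝ[X] := C μ - p with hq
  have hq1 : ¬IsUnit (aeval L q) := by
    rw [hq, map_sub, aeval_C]
    exact hμ
  by_cases hq0 : q = 0
  · obtain ⟨x, hx⟩ := hne
    refine ⟨x, hx, ?_⟩
    have hpc : p = C μ := by
      have : C μ - p = 0 := by rw [← hq, hq0]
      linear_combination -this
    rw [hpc, eval_C]
  · obtain ⟨u, hu⟩ := UniqueFactorizationMonoid.factors_prod hq0
    have huunit : IsUnit (aeval L (u : ℝ[X])) := by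
      obtain ⟨r, hr, hru⟩ := Polynomial.isUnit_iff.mp u.isUnit
      rw [← hru, aeval_C]
      exact hr.map _
    have hprod : ¬IsUnit (aeval L (UniqueFactorizationMonoid.factors q).prod) := by
      intro hP
      apply hq1
      rw [← hu, map_mul]
      exact hP.mul huunit
    obtain ⟨r, hrmem, hrnu⟩ := aux_multiset_factor L _ hprod
    have hirr : Irreducible r := UniqueFactorizationMonoid.irreducible_of_factor r hrmem
    have hrdvd : r ∣ q := by
      have h1 : r ∣ (UniqueFactorizationMonoid.factors q).prod := Multiset.dvd_prod hrmem
      exact h1.trans ⟨↑u, hu.symm⟩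
    have hdeg2 : r.natDegree ≤ 2 := natDegree_le_iff_degree_le.mpr hirr.degree_le_two
    have hdeg1 : 1 ≤ r.natDegree := by
      by_contra h
      push_neg at h
      have h0 : r.natDegree = 0 := by omega
      have hrC : r = C (r.coeff 0) := Polynomial.eq_C_of_natDegree_eq_zero h0
      have hc0 : r.coeff 0 ≠ 0 := by
        intro hcc
        apply hirr.ne_zero
        rw [hrC, hcc, map_zero]
      exact hirr.not_isUnit (hrC ▸ Polynomial.isUnit_C.mpr hc0.isUnit)
    have hcase : r.natDegree = 1 ∨ r.natDegree = 2 := by omega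
    rcases hcase with h1 | h2
    · -- linear factor: gives a spectral point
      have hrep := Polynomial.eq_X_add_C_of_natDegree_le_one (le_of_eq h1)
      set A : ℝ := r.coeff 1 with hA
      set B : ℝ := r.coeff 0 with hB
      have hAne : A ≠ 0 := by
        have h3 : r.leadingCoeff ≠ 0 := Polynomial.leadingCoeff_ne_zero.mpr hirr.ne_zero
        rwa [Polynomial.leadingCoeff, h1] at h3
      set x : ℝ := -B / A with hx
      have hxmem : x ∈ spectrum ℝ L := by
        rw [spectrum.mem_iff]
        intro hU
        apply hrnu
        have hkey : aeval L r = (-A) • (algebraMap ℝ (H →L[ℝ] H) x - L) := by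
          conv_lhs => rw [hrep]
          ext w
          simp only [map_add, map_mul, aeval_X, aeval_C, Algebra.algebraMap_eq_smul_one,
            ContinuousLinearMap.add_apply, ContinuousLinearMap.smul_apply,
            ContinuousLinearMap.sub_apply, ContinuousLinearMap.mul_apply,
            ContinuousLinearMap.one_apply, smul_sub, smul_smul]
          rw [hx]
          have hAx : -A * (-B / A) = B := by field_simp
          rw [hAx]
          module
        rw [hkey, Algebra.smul_def]
        exact ((neg_ne_zero.mpr hAne).isUnit.map (algebraMap ℝ (H →L[ℝ] H))).mul hU
      refine ⟨x, hxmem, ?_⟩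
      have hevalr : r.eval x = 0 := by
        conv_lhs => rw [hrep]
        simp only [eval_add, eval_mul, eval_C, eval_X, ← hA, ← hB]
        rw [hx]
        field_simp
        ring
      have hevalq : q.eval x = 0 :=
        Polynomial.eval_eq_zero_of_dvd_of_eval_eq_zero hrdvd hevalr
      rw [hq] at hevalq
      simp only [eval_sub, eval_C] at hevalq
      linarith
    · -- quadratic factor: impossible
      exfalso
      have hrep := aux_quad_rep r hdeg2
      set A : ℝ := r.coeff 2 with hA
      set B : ℝ := r.coeff 1 with hB
      set D : ℝ := r.coeff 0 with hD
      have hAne : A ≠ 0 := by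
        have h3 : r.leadingCoeff ≠ 0 := Polynomial.leadingCoeff_ne_zero.mpr hirr.ne_zero
        rwa [Polynomial.leadingCoeff, h2] at h3
      have hnoroot : ∀ x : ℝ, r.eval x ≠ 0 := by
        intro x hx0
        obtain ⟨s, hs⟩ := Polynomial.dvd_iff_isRoot.mpr hx0
        rcases hirr.isUnit_or_isUnit hs with hXu | hSu
        · exact Polynomial.not_isUnit_X_sub_C x hXu
        · obtain ⟨cs, hcs, hcs2⟩ := Polynomial.isUnit_iff.mp hSu
          have hsne : s ≠ 0 := by
            intro h0
            rw [h0] at hcs2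
            exact hcs.ne_zero (Polynomial.C_eq_zero.mp hcs2)
          rw [hs, Polynomial.natDegree_mul (Polynomial.X_sub_C_ne_zero x) hsne,
            Polynomial.natDegree_X_sub_C] at h2
          have hs1 : s.natDegree = 1 := by omega
          rw [← hcs2, Polynomial.natDegree_C] at hs1
          exact one_ne_zero hs1.symm
      have hdisc : discrim A B D < 0 := by
        by_contra hcon
        push_neg at hcon
        obtain ⟨x, hx0⟩ := exists_quadratic_eq_zero hAne
          ⟨Real.sqrt (discrim A B D), (Real.mul_self_sqrt hcon).symm⟩
        apply hnoroot x
        conv_lhs => rw [hrep]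
        simp only [eval_add, eval_mul, eval_pow, eval_C, eval_X]
        nlinarith [hx0]
      have hU := aux_quadratic_unit L hL A B D hAne hdisc
      apply hrnu
      have hkey : aeval L r = A • L ^ 2 + B • L + D • (1 : H →L[ℝ] H) := by
        conv_lhs => rw [hrep]
        simp only [map_add, map_mul, map_pow, aeval_X, aeval_C, ← Algebra.smul_def]
        rw [Algebra.algebraMap_eq_smul_one]
      rw [hkey]
      exact hU

lemma aux_form_nonneg (L : H →L[ℝ] H) (hL : IsSelfAdjoint L) (hne : (spectrum ℝ L).Nonempty)
    (p : ℝ[X]) (hp : ∀ x ∈ spectrum ℝ L, 0 ≤ p.eval x) (u : H) :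
    0 ≤ ⟪(aeval L p) u, u⟫ := by
  rcases eq_or_ne u 0 with rfl | hu
  · simp
  · obtain ⟨m, hm, hform⟩ := aux_exists_bot (aeval L p) (aux_aeval_sa L hL p) u hu
    obtain ⟨x, hx, hex⟩ := aux_specmap L hL hne p hm
    have h0 : 0 ≤ m := hex ▸ hp x hx
    have := hform u
    nlinarith [sq_nonneg ‖u‖]

lemma aux_norm_bound (L : H →L[ℝ] H) (hL : IsSelfAdjoint L) (hne : (spectrum ℝ L).Nonempty)
    (p : ℝ[X]) (s : ℝ) (hs : 0 ≤ s) (hp : ∀ x ∈ spectrum ℝ L, (p.eval x) ^ 2 ≤ s ^ 2) (u : H) :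
    ‖(aeval L p) u‖ ≤ s * ‖u‖ := by
  have h1 : 0 ≤ ⟪(aeval L (C (s ^ 2) - p ^ 2)) u, u⟫ := by
    apply aux_form_nonneg L hL hne _ _ u
    intro x hx
    simp only [eval_sub, eval_pow, eval_C]
    have := hp x hx
    linarith
  have h2 : (aeval L (C (s ^ 2) - p ^ 2)) u = (s ^ 2) • u - (aeval L p) ((aeval L p) u) := by
    simp only [map_sub, map_pow, map_mul, aeval_C, Algebra.algebraMap_eq_smul_one, sq,
      ContinuousLinearMap.sub_apply, ContinuousLinearMap.smul_apply,
      ContinuousLinearMap.one_apply, ContinuousLinearMap.mul_apply]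
    rw [smul_smul]
  rw [h2, inner_sub_left, real_inner_smul_left, real_inner_self_eq_norm_sq,
    aux_symm _ (aux_aeval_sa L hL p) ((aeval L p) u) u, real_inner_self_eq_norm_sq] at h1
  nlinarith [norm_nonneg ((aeval L p) u), norm_nonneg u, mul_nonneg hs (norm_nonneg u),
    sq_nonneg (‖(aeval L p) u‖ + s * ‖u‖), sq_nonneg (‖(aeval L p) u‖ - s * ‖u‖)]

/-- If `P` is a polynomial equal to `1` at an isolated simple eigenvalue `lam` and
uniformly small (≤ θ < 1) on the rest of the spectrum, then for `y ⊥ v` the quantities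
`⟪P(L)^m y, y⟫` tend to zero. -/
lemma aux_tendsto_zero
    (L : H →L[ℝ] H) (hL : IsSelfAdjoint L) (hne : (spectrum ℝ L).Nonempty)
    (P : ℝ[X]) (θ C0 : ℝ) (hθ0 : 0 ≤ θ) (hθ1 : θ < 1) (hC0 : 0 ≤ C0)
    (v : H) (hvne : v ≠ 0) (lam : ℝ) (hv : L v = lam • v)
    (hsimple : ∀ w : H, L w = lam • w → ∃ a : ℝ, w = a • v)
    (heval : P.eval lam = 1)
    (hb1 : ∀ j m : ℕ, j ≤ m → ∀ x ∈ spectrum ℝ L,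
      (Polynomial.eval x (P ^ m - P ^ j)) ^ 2 ≤ (θ ^ j) ^ 2)
    (hb2 : ∀ m : ℕ, ∀ x ∈ spectrum ℝ L,
      (Polynomial.eval x ((X - C lam) * P ^ m)) ^ 2 ≤ (C0 * θ ^ m) ^ 2)
    (y : H) (hy : ⟪y, v⟫ = 0) :
    Filter.Tendsto (fun m : ℕ => ⟪(aeval L (P ^ m)) y, y⟫) Filter.atTop (nhds 0) := by
  set w : ℕ → H := fun m => (aeval L (P ^ m)) y with hw
  have hwdiff : ∀ j m : ℕ, j ≤ m → ‖w m - w j‖ ≤ θ ^ j * ‖y‖ := by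
    intro j m hjm
    have h1 : w m - w j = (aeval L (P ^ m - P ^ j)) y := by
      rw [map_sub, ContinuousLinearMap.sub_apply]
    rw [h1]
    exact aux_norm_bound L hL hne _ _ (pow_nonneg hθ0 j) (hb1 j m hjm) y
  have hcauchy : CauchySeq w := by
    apply cauchySeq_of_le_geometric θ ‖y‖ hθ1
    intro n
    rw [dist_eq_norm, norm_sub_rev]
    calc ‖w (n+1) - w n‖ ≤ θ ^ n * ‖y‖ := hwdiff n (n+1) (Nat.le_succ n)
      _ = ‖y‖ * θ ^ n := by ring
  obtain ⟨wl, hwl⟩ := cauchySeq_tendsto_of_complete hcauchy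
  have hLw : ∀ m : ℕ, ‖L (w m) - lam • (w m)‖ ≤ (C0 * ‖y‖) * θ ^ m := by
    intro m
    have h1 : L (w m) - lam • (w m) = (aeval L ((X - C lam) * P ^ m)) y := by
      rw [map_mul]
      simp only [map_sub, aeval_X, aeval_C, ContinuousLinearMap.mul_apply,
        ContinuousLinearMap.sub_apply, Algebra.algebraMap_eq_smul_one,
        ContinuousLinearMap.smul_apply, ContinuousLinearMap.one_apply, hw]
    rw [h1]
    calc ‖(aeval L ((X - C lam) * P ^ m)) y‖ ≤ (C0 * θ ^ m) * ‖y‖ :=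
          aux_norm_bound L hL hne _ _ (mul_nonneg hC0 (pow_nonneg hθ0 m)) (hb2 m) y
      _ = (C0 * ‖y‖) * θ ^ m := by ring
  have hlim2 : Filter.Tendsto (fun m => L (w m) - lam • (w m)) Filter.atTop
      (nhds (L wl - lam • wl)) :=
    ((L.continuous.tendsto wl).comp hwl).sub (hwl.const_smul lam)
  have hlim3 : Filter.Tendsto (fun m => L (w m) - lam • (w m)) Filter.atTop (nhds 0) := by
    apply squeeze_zero_norm hLw
    simpa using (tendsto_pow_atTop_nhds_zero_of_lt_one hθ0 hθ1).const_mul (C0 * ‖y‖)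
  have hwe : L wl = lam • wl := by
    have h0 := tendsto_nhds_unique hlim2 hlim3
    rwa [sub_eq_zero] at h0
  obtain ⟨a, ha⟩ := hsimple wl hwe
  have hwm_v : ∀ m : ℕ, ⟪w m, v⟫ = 0 := by
    intro m
    rw [hw]
    rw [aux_symm _ (aux_aeval_sa L hL (P ^ m)), aux_aeval_eig L v lam hv (P ^ m),
      eval_pow, heval, one_pow, one_smul]
    exact hy
  have hwlv : ⟪wl, v⟫ = 0 := by
    have h1 : Filter.Tendsto (fun m => ⟪w m, v⟫) Filter.atTop (nhds ⟪wl, v⟫) :=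
      hwl.inner tendsto_const_nhds
    have h2 : Filter.Tendsto (fun m => ⟪w m, v⟫) Filter.atTop (nhds 0) := by
      simp only [hwm_v]
      exact tendsto_const_nhds
    exact tendsto_nhds_unique h1 h2
  have ha0 : a = 0 := by
    rw [ha, real_inner_smul_left, real_inner_self_eq_norm_sq] at hwlv
    have hvp : (0:ℝ) < ‖v‖ ^ 2 := by
      have := norm_pos_iff.mpr hvne
      positivity
    rcases mul_eq_zero.mp hwlv with h | h
    · exact h
    · exact absurd h (by positivity)
  have hwl0 : wl = 0 := by rw [ha, ha0, zero_smul]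
  have hfin : Filter.Tendsto (fun m => ⟪w m, y⟫) Filter.atTop (nhds ⟪wl, y⟫) :=
    hwl.inner tendsto_const_nhds
  rw [hwl0] at hfin
  simpa only [inner_zero_left] using hfin

end Aux

lemma aux_final_ineq (lneg N al a Y Z : ℝ) (hlneg : lneg < 0) (hN : 0 < N)
    (ha : a ≠ 0) (hal : al ≠ 0)
    (hCS : (-(a * al * lneg * N)) ^ 2 ≤ Y * Z) (hZlt : Z < -(al ^ 2 * lneg * N))
    (hZ0 : 0 < Z) : 0 < a ^ 2 * lneg * N + Y := by
  have hln : lneg * N < 0 := mul_neg_of_neg_of_pos hlneg hN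
  have haa : 0 < a * a := mul_self_pos.mpr ha
  have hannN : a ^ 2 * lneg * N < 0 := by
    have h2 := mul_neg_of_pos_of_neg haa hln
    nlinarith [h2]
  have h1 : a ^ 2 * lneg * N * (-(al ^ 2 * lneg * N)) < a ^ 2 * lneg * N * Z :=
    mul_lt_mul_of_neg_left hZlt hannN
  nlinarith [h1, hCS, hZ0]

set_option maxHeartbeats 1600000 in
/-- Let `L` be a self-adjoint (bounded) operator on a real Hilbert space with
exactly one simple negative eigenvalue, a simple zero eigenvalue with eigenvector
`v₀`, and the rest of the spectrum positive and bounded away from zero. Let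
`φ ⊥ v₀`, `φ ≠ 0`, and suppose `Lψ = φ` with `⟨ψ, φ⟩ < 0`. Then `L` restricted to
the orthogonal complement of `φ` is nonnegative, with kernel spanned by `v₀`. -/
theorem constrained_positivity
    (H : Type*) [NormedAddCommGroup H] [InnerProductSpace ℝ H] [CompleteSpace H]
    (L : H →L[ℝ] H) (hsa : IsSelfAdjoint L)
    (lneg : ℝ) (hlneg : lneg < 0) (vneg : H) (hvneg : vneg ≠ 0)
    (heigneg : L vneg = lneg • vneg)
    (hsimpleneg : ∀ w : H, L w = lneg • w → ∃ a : ℝ, w = a • vneg)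
    (honlyneg : ∀ μ ∈ spectrum ℝ L, μ < 0 → μ = lneg)
    (v0 : H) (hv0 : v0 ≠ 0) (hker : L v0 = 0)
    (hsimple0 : ∀ w : H, L w = 0 → ∃ a : ℝ, w = a • v0)
    (hgap : ∃ δ > (0 : ℝ), ∀ μ ∈ spectrum ℝ L, μ = lneg ∨ μ = 0 ∨ δ ≤ μ)
    (φ : H) (hφv0 : ⟪φ, v0⟫ = 0) (hφ : φ ≠ 0)
    (ψ : H) (hψ : L ψ = φ) (hslope : ⟪ψ, φ⟫ < 0) :
    ∀ u : H, ⟪u, φ⟫ = 0 →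
      0 ≤ ⟪L u, u⟫ ∧ (⟪L u, u⟫ = 0 → ∃ a : ℝ, u = a • v0) := by
  haveI : Nontrivial H := ⟨⟨vneg, 0, hvneg⟩⟩
  obtain ⟨δ, hδ, hgapμ⟩ := hgap
  -- `lneg` is in the spectrum
  have hLneg_mem : lneg ∈ spectrum ℝ L := by
    rw [spectrum.mem_iff]
    intro hU
    have happ : (algebraMap ℝ (H →L[ℝ] H) lneg - L) vneg = 0 := by
      simp [ContinuousLinearMap.sub_apply, Algebra.algebraMap_eq_smul_one, heigneg]
    have hinj := (ContinuousLinearMap.isUnit_iff_bijective.mp hU).1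
    apply hvneg
    have h0 : (algebraMap ℝ (H →L[ℝ] H) lneg - L) vneg
        = (algebraMap ℝ (H →L[ℝ] H) lneg - L) 0 := by
      rw [happ, map_zero]
    exact hinj h0
  have hne : (spectrum ℝ L).Nonempty := ⟨lneg, hLneg_mem⟩
  set M : ℝ := ‖L‖ with hM
  have hM0 : 0 ≤ M := norm_nonneg L
  have hMbound : ∀ x ∈ spectrum ℝ L, |x| ≤ M := by
    intro x hx
    have := spectrum.norm_le_norm_of_mem hx
    rwa [Real.norm_eq_abs] at this
  have hlnegM : |lneg| ≤ M := hMbound lneg hLneg_mem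
  have hspec : ∀ x ∈ spectrum ℝ L, (x = lneg ∨ x = 0 ∨ δ ≤ x) ∧ |x| ≤ M :=
    fun x hx => ⟨hgapμ x hx, hMbound x hx⟩
  -- the scale for our polynomials
  set K : ℝ := (2 * M + |lneg| + 1) ^ 2 with hK
  have hK0 : 0 < K := by positivity
  have hKbig : ∀ x : ℝ, |x| ≤ M → (x - lneg) ^ 2 ≤ K ∧ x ^ 2 ≤ K := by
    intro x hx
    have h1 := abs_le.mp hx
    have h2 := abs_le.mp hlnegM
    have h3 := abs_nonneg lneg
    constructor
    · nlinarith [h1.1, h1.2, h2.1, h2.2, hM0]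
    · nlinarith [h1.1, h1.2, hM0, h3]
  set ν : ℝ := min (lneg ^ 2) (δ ^ 2) with hν
  have hν0 : 0 < ν := by
    rw [hν, lt_min_iff]
    constructor
    · nlinarith [hlneg]
    · positivity
  have hνK : ν ≤ K := by
    have h1 : ν ≤ lneg ^ 2 := min_le_left _ _
    have h2 : lneg ^ 2 = |lneg| ^ 2 := (sq_abs lneg).symm
    have h3 := abs_nonneg lneg
    nlinarith [hlnegM, hM0]
  set θ : ℝ := 1 - ν / K with hθ
  have hθ0 : 0 ≤ θ := by
    rw [hθ, sub_nonneg, div_le_one hK0]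
    exact hνK
  have hθ1 : θ < 1 := by
    rw [hθ]
    have : 0 < ν / K := div_pos hν0 hK0
    linarith
  -- the two polynomials
  set fp : ℝ[X] := 1 - C K⁻¹ * (X - C lneg) ^ 2 with hfp
  set gp : ℝ[X] := 1 - C K⁻¹ * X ^ 2 with hgp
  have hfpe : ∀ x : ℝ, fp.eval x = 1 - K⁻¹ * (x - lneg) ^ 2 := by
    intro x
    simp [hfp]
  have hgpe : ∀ x : ℝ, gp.eval x = 1 - K⁻¹ * x ^ 2 := by
    intro x
    simp [hgp]
  have hfpl : fp.eval lneg = 1 := by rw [hfpe]; simp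
  have hgp0 : gp.eval 0 = 1 := by rw [hgpe]; simp
  -- ranges on the spectrum
  have hf_range : ∀ x ∈ spectrum ℝ L, 0 ≤ fp.eval x ∧ fp.eval x ≤ 1 := by
    intro x hx
    obtain ⟨-, hxM⟩ := hspec x hx
    obtain ⟨h1, -⟩ := hKbig x hxM
    rw [hfpe]
    constructor
    · have : K⁻¹ * (x - lneg) ^ 2 ≤ K⁻¹ * K :=
        mul_le_mul_of_nonneg_left h1 (by positivity)
      rw [inv_mul_cancel₀ (ne_of_gt hK0)] at this
      linarith
    · nlinarith [sq_nonneg (x - lneg), inv_pos.mpr hK0]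
  have hg_range : ∀ x ∈ spectrum ℝ L, 0 ≤ gp.eval x ∧ gp.eval x ≤ 1 := by
    intro x hx
    obtain ⟨-, hxM⟩ := hspec x hx
    obtain ⟨-, h1⟩ := hKbig x hxM
    rw [hgpe]
    constructor
    · have : K⁻¹ * x ^ 2 ≤ K⁻¹ * K :=
        mul_le_mul_of_nonneg_left h1 (by positivity)
      rw [inv_mul_cancel₀ (ne_of_gt hK0)] at this
      linarith
    · nlinarith [sq_nonneg x, inv_pos.mpr hK0]
  have hf_small : ∀ x ∈ spectrum ℝ L, x ≠ lneg → fp.eval x ≤ θ := by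
    intro x hx hxl
    obtain ⟨hcase, hxM⟩ := hspec x hx
    have hsq : ν ≤ (x - lneg) ^ 2 := by
      rcases hcase with h | h | h
      · exact absurd h hxl
      · rw [h]
        calc ν ≤ lneg ^ 2 := min_le_left _ _
          _ = (0 - lneg) ^ 2 := by ring
      · calc ν ≤ δ ^ 2 := min_le_right _ _
          _ ≤ (x - lneg) ^ 2 := by nlinarith [hδ, hlneg, h]
    rw [hfpe, hθ, div_eq_inv_mul]
    have h2 : ν / K ≤ (x - lneg) ^ 2 / K := by gcongr
    rw [div_eq_inv_mul, div_eq_inv_mul] at h2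
    linarith
  have hg_small : ∀ x ∈ spectrum ℝ L, x ≠ 0 → gp.eval x ≤ θ := by
    intro x hx hxl
    obtain ⟨hcase, hxM⟩ := hspec x hx
    have hsq : ν ≤ x ^ 2 := by
      rcases hcase with h | h | h
      · rw [h]
        exact min_le_left _ _
      · exact absurd h hxl
      · calc ν ≤ δ ^ 2 := min_le_right _ _
          _ ≤ x ^ 2 := by nlinarith [hδ, h]
    rw [hgpe, hθ, div_eq_inv_mul]
    have h2 : ν / K ≤ x ^ 2 / K := by gcongr
    rw [div_eq_inv_mul, div_eq_inv_mul] at h2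
    linarith
  -- the two "projection decay" statements
  have htf : ∀ y : H, ⟪y, vneg⟫ = 0 →
      Filter.Tendsto (fun m : ℕ => ⟪(aeval L (fp ^ m)) y, y⟫) Filter.atTop (nhds 0) := by
    intro y hy
    apply aux_tendsto_zero L hsa hne fp θ (M + |lneg|) hθ0 hθ1 (by positivity) vneg hvneg lneg
      heigneg hsimpleneg hfpl ?_ ?_ y hy
    · intro j m hjm x hx
      rw [eval_sub, eval_pow, eval_pow]
      by_cases hxl : x = lneg
      · rw [hxl, hfpl]
        simp only [one_pow, sub_self]
        simpa using sq_nonneg (θ ^ j)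
      · obtain ⟨hf0, hf1⟩ := hf_range x hx
        have hfθ := hf_small x hx hxl
        have hpow1 : eval x fp ^ m ≤ eval x fp ^ j := pow_le_pow_of_le_one hf0 hf1 hjm
        have hpow2 : eval x fp ^ j ≤ θ ^ j := pow_le_pow_left₀ hf0 hfθ j
        have hpow0 : 0 ≤ eval x fp ^ m := pow_nonneg hf0 m
        have hθj0 : 0 ≤ θ ^ j := pow_nonneg hθ0 j
        nlinarith
    · intro m x hx
      rw [eval_mul, eval_sub, eval_X, eval_C, eval_pow]
      by_cases hxl : x = lneg
      · rw [hxl]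
        simp only [sub_self, zero_mul]
        simpa using sq_nonneg ((M + |lneg|) * θ ^ m)
      · obtain ⟨hf0, hf1⟩ := hf_range x hx
        have hfθ := hf_small x hx hxl
        have hpow2 : eval x fp ^ m ≤ θ ^ m := pow_le_pow_left₀ hf0 hfθ m
        have hpow0 : 0 ≤ eval x fp ^ m := pow_nonneg hf0 m
        have hxa := abs_le.mp ((hspec x hx).2)
        have h2 := abs_le.mp hlnegM
        have hθm0 : 0 ≤ θ ^ m := pow_nonneg hθ0 m
        have h5 : (x - lneg) ^ 2 ≤ (M + |lneg|) ^ 2 :=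
          sq_le_sq' (by linarith [hxa.1, le_abs_self lneg])
            (by linarith [hxa.2, neg_abs_le lneg])
        have h6 : (eval x fp ^ m) ^ 2 ≤ (θ ^ m) ^ 2 := by nlinarith
        have h7 := mul_le_mul h5 h6 (sq_nonneg _) (sq_nonneg _)
        nlinarith [h7]
  have htg : ∀ y : H, ⟪y, v0⟫ = 0 →
      Filter.Tendsto (fun m : ℕ => ⟪(aeval L (gp ^ m)) y, y⟫) Filter.atTop (nhds 0) := by
    intro y hy
    apply aux_tendsto_zero L hsa hne gp θ M hθ0 hθ1 hM0 v0 hv0 0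
      (by rw [hker, zero_smul]) (fun w hw => hsimple0 w (by rwa [zero_smul] at hw))
      hgp0 ?_ ?_ y hy
    · intro j m hjm x hx
      rw [eval_sub, eval_pow, eval_pow]
      by_cases hxl : x = 0
      · rw [hxl, hgp0]
        simp only [one_pow, sub_self]
        simpa using sq_nonneg (θ ^ j)
      · obtain ⟨hg0, hg1⟩ := hg_range x hx
        have hgθ := hg_small x hx hxl
        have hpow1 : eval x gp ^ m ≤ eval x gp ^ j := pow_le_pow_of_le_one hg0 hg1 hjm
        have hpow2 : eval x gp ^ j ≤ θ ^ j := pow_le_pow_left₀ hg0 hgθ j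
        have hpow0 : 0 ≤ eval x gp ^ m := pow_nonneg hg0 m
        have hθj0 : 0 ≤ θ ^ j := pow_nonneg hθ0 j
        nlinarith
    · intro m x hx
      rw [eval_mul, eval_sub, eval_X, eval_C, eval_pow]
      by_cases hxl : x = 0
      · rw [hxl]
        simp only [sub_zero, zero_mul]
        simpa using sq_nonneg (M * θ ^ m)
      · obtain ⟨hg0, hg1⟩ := hg_range x hx
        have hgθ := hg_small x hx hxl
        have hpow2 : eval x gp ^ m ≤ θ ^ m := pow_le_pow_left₀ hg0 hgθ m
        have hpow0 : 0 ≤ eval x gp ^ m := pow_nonneg hg0 m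
        have hxa := abs_le.mp ((hspec x hx).2)
        have hθm0 : 0 ≤ θ ^ m := pow_nonneg hθ0 m
        have h5 : (x - 0) ^ 2 ≤ M ^ 2 :=
          sq_le_sq' (by linarith [hxa.1]) (by linarith [hxa.2])
        have h6 : (eval x gp ^ m) ^ 2 ≤ (θ ^ m) ^ 2 := by nlinarith
        have h7 := mul_le_mul h5 h6 (sq_nonneg _) (sq_nonneg _)
        nlinarith [h7]
  -- key coercivity on the positive subspace
  have hKey : ∀ y : H, ⟪y, vneg⟫ = 0 → ⟪y, v0⟫ = 0 → δ * ‖y‖ ^ 2 ≤ ⟪L y, y⟫ := by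
    intro y hyn hy0
    set dm : ℕ → ℝ[X] := fun m => X - C δ + C (δ - lneg) * fp ^ m + C δ * gp ^ m with hdm
    have hdm_nonneg : ∀ m : ℕ, ∀ x ∈ spectrum ℝ L, 0 ≤ (dm m).eval x := by
      intro m x hx
      simp only [hdm, eval_add, eval_sub, eval_mul, eval_X, eval_C, eval_pow]
      obtain ⟨hcase, hxM⟩ := hspec x hx
      obtain ⟨hf0, hf1⟩ := hf_range x hx
      obtain ⟨hg0, hg1⟩ := hg_range x hx
      rcases hcase with h | h | h
      · rw [h, hfpl, one_pow]
        rw [h] at hg0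
        have h1 : 0 ≤ eval lneg gp ^ m := pow_nonneg hg0 m
        nlinarith [hδ]
      · rw [h, hgp0, one_pow]
        rw [h] at hf0
        have h1 : 0 ≤ eval 0 fp ^ m := pow_nonneg hf0 m
        nlinarith [hδ, hlneg]
      · have h1 : 0 ≤ eval x fp ^ m := pow_nonneg hf0 m
        have h2 : 0 ≤ eval x gp ^ m := pow_nonneg hg0 m
        nlinarith [hδ, hlneg, h]
    have hform : ∀ m : ℕ, 0 ≤ ⟪(aeval L (dm m)) y, y⟫ := fun m =>
      aux_form_nonneg L hsa hne (dm m) (hdm_nonneg m) y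
    have hexpand : (fun m : ℕ => ⟪(aeval L (dm m)) y, y⟫)
        = fun m : ℕ => (⟪L y, y⟫ - δ * ‖y‖ ^ 2) + (δ - lneg) * ⟪(aeval L (fp ^ m)) y, y⟫
          + δ * ⟪(aeval L (gp ^ m)) y, y⟫ := by
      funext m
      have happ : (aeval L (dm m)) y = L y - δ • y + (δ - lneg) • ((aeval L (fp ^ m)) y)
          + δ • ((aeval L (gp ^ m)) y) := by
        simp only [hdm, map_add, map_sub, map_mul, aeval_X, aeval_C,
          Algebra.algebraMap_eq_smul_one, ContinuousLinearMap.add_apply,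
          ContinuousLinearMap.sub_apply, ContinuousLinearMap.smul_apply,
          ContinuousLinearMap.one_apply, ContinuousLinearMap.mul_apply]
        module
      rw [happ, inner_add_left, inner_add_left, inner_sub_left,
        real_inner_smul_left, real_inner_smul_left, real_inner_smul_left,
        real_inner_self_eq_norm_sq]
    have hlim : Filter.Tendsto (fun m : ℕ => ⟪(aeval L (dm m)) y, y⟫) Filter.atTop
        (nhds (⟪L y, y⟫ - δ * ‖y‖ ^ 2)) := by
      have h1 := (htf y hyn).const_mul (δ - lneg)
      have h2 := (htg y hy0).const_mul δ
      have h3 := ((tendsto_const_nhds (x := ⟪L y, y⟫ - δ * ‖y‖ ^ 2)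
        (f := (Filter.atTop : Filter ℕ))).add h1).add h2
      rw [hexpand]
      simpa using h3
    have hfin := ge_of_tendsto' hlim hform
    linarith
  -- orthogonality of the two eigenvectors
  have hvv0 : ⟪vneg, v0⟫ = 0 := by
    have h1 : lneg * ⟪vneg, v0⟫ = 0 := by
      calc lneg * ⟪vneg, v0⟫ = ⟪lneg • vneg, v0⟫ := (real_inner_smul_left _ _ _).symm
        _ = ⟪L vneg, v0⟫ := by rw [heigneg]
        _ = ⟪vneg, L v0⟫ := aux_symm L hsa vneg v0
        _ = 0 := by rw [hker, inner_zero_right]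
    rcases mul_eq_zero.mp h1 with h | h
    · exact absurd h (ne_of_lt hlneg)
    · exact h
  have hv0v : ⟪v0, vneg⟫ = 0 := by rw [real_inner_comm]; exact hvv0
  set N : ℝ := ‖vneg‖ ^ 2 with hN
  have hNpos : 0 < N := by
    have := norm_pos_iff.mpr hvneg
    positivity
  set N0 : ℝ := ‖v0‖ ^ 2 with hN0
  have hN0pos : 0 < N0 := by
    have := norm_pos_iff.mpr hv0
    positivity
  -- decompose ψ
  set α : ℝ := ⟪ψ, vneg⟫ / N with hαdef
  set βψ : ℝ := ⟪ψ, v0⟫ / N0 with hβdef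
  set z : H := ψ - α • vneg - βψ • v0 with hz
  have hψdec : ψ = α • vneg + βψ • v0 + z := by rw [hz]; abel
  have hz1 : ⟪z, vneg⟫ = 0 := by
    rw [hz]
    simp only [inner_sub_left, real_inner_smul_left]
    rw [real_inner_self_eq_norm_sq, ← hN, hv0v, hαdef]
    field_simp
    ring
  have hz2 : ⟪z, v0⟫ = 0 := by
    rw [hz]
    simp only [inner_sub_left, real_inner_smul_left]
    rw [real_inner_self_eq_norm_sq, ← hN0, hvv0, hβdef]
    field_simp
    ring
  have hLz1 : ⟪L z, vneg⟫ = 0 := by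
    rw [aux_symm L hsa z vneg, heigneg, real_inner_smul_right, hz1, mul_zero]
  have hLz2 : ⟪L z, v0⟫ = 0 := by
    rw [aux_symm L hsa z v0, hker, inner_zero_right]
  have e1 : ⟪vneg, L z⟫ = 0 := by rw [real_inner_comm]; exact hLz1
  have e3 : ⟪v0, L z⟫ = 0 := by rw [real_inner_comm]; exact hLz2
  have e4 : ⟪z, L z⟫ = ⟪L z, z⟫ := real_inner_comm _ _
  have hzv : ⟪vneg, z⟫ = 0 := by rw [real_inner_comm]; exact hz1
  have hφdec : φ = (α * lneg) • vneg + L z := by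
    rw [← hψ]
    conv_lhs => rw [hψdec]
    simp only [map_add, map_smul, heigneg, hker, smul_zero, add_zero, smul_smul, zero_add]
  have hslope' : α ^ 2 * lneg * N + ⟪L z, z⟫ < 0 := by
    have hexp : ⟪ψ, φ⟫ = α ^ 2 * lneg * N + ⟪L z, z⟫ := by
      conv_lhs => rw [hψdec, hφdec]
      simp only [inner_add_left, inner_add_right, real_inner_smul_left, real_inner_smul_right]
      rw [real_inner_self_eq_norm_sq, ← hN, e1, e3, hv0v, hz1, e4]
      ring
    rw [hexp] at hslope
    exact hslope
  have hZpos := hKey z hz1 hz2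
  -- now fix `u`
  intro u hu
  set a : ℝ := ⟪u, vneg⟫ / N with hadef
  set b : ℝ := ⟪u, v0⟫ / N0 with hbdef
  set y : H := u - a • vneg - b • v0 with hy
  have hudec : u = a • vneg + b • v0 + y := by rw [hy]; abel
  have hy1 : ⟪y, vneg⟫ = 0 := by
    rw [hy]
    simp only [inner_sub_left, real_inner_smul_left]
    rw [real_inner_self_eq_norm_sq, ← hN, hv0v, hadef]
    field_simp
    ring
  have hy2 : ⟪y, v0⟫ = 0 := by
    rw [hy]
    simp only [inner_sub_left, real_inner_smul_left]
    rw [real_inner_self_eq_norm_sq, ← hN0, hvv0, hbdef]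
    field_simp
    ring
  have hLy1 : ⟪L y, vneg⟫ = 0 := by
    rw [aux_symm L hsa y vneg, heigneg, real_inner_smul_right, hy1, mul_zero]
  have hLy2 : ⟪L y, v0⟫ = 0 := by
    rw [aux_symm L hsa y v0, hker, inner_zero_right]
  have hyv : ⟪vneg, y⟫ = 0 := by rw [real_inner_comm]; exact hy1
  have hYpos := hKey y hy1 hy2
  have hLudec : L u = (a * lneg) • vneg + L y := by
    conv_lhs => rw [hudec]
    simp only [map_add, map_smul, heigneg, hker, smul_zero, add_zero, smul_smul, zero_add]
  have hLuu : ⟪L u, u⟫ = a ^ 2 * lneg * N + ⟪L y, y⟫ := by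
    conv_lhs => rw [hLudec, hudec]
    simp only [inner_add_left, inner_add_right, real_inner_smul_left, real_inner_smul_right]
    rw [real_inner_self_eq_norm_sq, ← hN, hvv0, hyv, hLy1, hLy2]
    ring
  have hucon : a * α * lneg * N + ⟪L y, z⟫ = 0 := by
    have e5 : ⟪y, L z⟫ = ⟪L y, z⟫ := (aux_symm L hsa y z).symm
    have hexp : ⟪u, φ⟫ = a * α * lneg * N + ⟪L y, z⟫ := by
      conv_lhs => rw [hudec, hφdec]
      simp only [inner_add_left, inner_add_right, real_inner_smul_left, real_inner_smul_right]
      rw [real_inner_self_eq_norm_sq, ← hN, e1, e3, hv0v, hy1, e5]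
      ring
    rw [hexp] at hu
    exact hu
  -- Cauchy–Schwarz for the form on the positive subspace
  have hquad : ∀ t : ℝ, 0 ≤ ⟪L z, z⟫ * (t * t) + (2 * ⟪L y, z⟫) * t + ⟪L y, y⟫ := by
    intro t
    have horth1 : ⟪y + t • z, vneg⟫ = 0 := by
      rw [inner_add_left, real_inner_smul_left, hy1, hz1]
      ring
    have horth2 : ⟪y + t • z, v0⟫ = 0 := by
      rw [inner_add_left, real_inner_smul_left, hy2, hz2]
      ring
    have h := hKey (y + t • z) horth1 horth2
    have h0 : 0 ≤ ⟪L (y + t • z), y + t • z⟫ :=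
      le_trans (mul_nonneg hδ.le (sq_nonneg _)) h
    have hsym2 : ⟪L z, y⟫ = ⟪L y, z⟫ := by
      rw [aux_symm L hsa z y, real_inner_comm]
    simp only [map_add, map_smul, inner_add_left, inner_add_right, real_inner_smul_left,
      real_inner_smul_right] at h0
    rw [hsym2] at h0
    linarith only [h0]
  have hCS : ⟪L y, z⟫ ^ 2 ≤ ⟪L y, y⟫ * ⟪L z, z⟫ := by
    have hd := discrim_le_zero hquad
    rw [discrim] at hd
    linarith only [hd]
  -- final case analysis
  by_cases ha0 : a = 0
  · have hLuu0 : ⟪L u, u⟫ = ⟪L y, y⟫ := by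
      rw [hLuu, ha0]
      ring
    constructor
    · rw [hLuu0]
      have := mul_nonneg hδ.le (sq_nonneg ‖y‖)
      linarith [hYpos]
    · intro h0
      rw [hLuu0] at h0
      rw [h0] at hYpos
      have h2 : ‖y‖ ^ 2 ≤ 0 := by
        by_contra hc
        push_neg at hc
        have hcc := mul_pos hδ hc
        linarith only [hYpos, hcc]
      have h3 : ‖y‖ ^ 2 = 0 := le_antisymm h2 (sq_nonneg _)
      have h4 : y = 0 := by
        rw [pow_eq_zero_iff (two_ne_zero)] at h3
        exact norm_eq_zero.mp h3
      exact ⟨b, by rw [hudec, ha0, h4]; simp⟩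
  · have hα0 : α ≠ 0 := by
      intro h0
      rw [h0] at hslope'
      have h1 := mul_nonneg hδ.le (sq_nonneg ‖z‖)
      have h2 : ⟪L z, z⟫ < 0 := by linarith only [hslope']
      linarith only [h1, h2, hZpos]
    have hZform0 : 0 ≤ ⟪L z, z⟫ := le_trans (mul_nonneg hδ.le (sq_nonneg ‖z‖)) hZpos
    have hZ0 : 0 < ⟪L z, z⟫ := by
      rcases lt_or_eq_of_le hZform0 with h | h
      · exact h
      · exfalso
        have hLyz0 : ⟪L y, z⟫ = 0 := by
          have h1 : ⟪L y, z⟫ ^ 2 ≤ 0 := by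
            rw [← h] at hCS
            simpa using hCS
          have h3 : ⟪L y, z⟫ ^ 2 = 0 := le_antisymm h1 (sq_nonneg _)
          exact pow_eq_zero_iff two_ne_zero |>.mp h3
        rw [hLyz0, add_zero] at hucon
        exact (mul_ne_zero (mul_ne_zero (mul_ne_zero ha0 hα0) (ne_of_lt hlneg))
          (ne_of_gt hNpos)) hucon
    have hstrict : 0 < ⟪L u, u⟫ := by
      rw [hLuu]
      have hLyz : ⟪L y, z⟫ = -(a * α * lneg * N) := by linarith only [hucon]
      have hCS' := hCS
      rw [hLyz] at hCS'
      have hZlt : ⟪L z, z⟫ < -(α ^ 2 * lneg * N) := by linarith only [hslope']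
      exact aux_final_ineq lneg N α a _ _ hlneg hNpos ha0 hα0 hCS' hZlt hZ0
    exact ⟨le_of_lt hstrict, fun h0 => absurd h0 (ne_of_gt hstrict)⟩
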